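/- Fix N ≥ 2 and a parent map p : {2,...,N} → {1,...,N} with p(k) < k (a directed spanning tree with topological order). Consider any family of symmetric matrices S(φ) ∈ ℝ^{(N−1)×(N−1)} parametrized by positive reals φ_2,...,φ_N, where S(φ)_{kk} = 2φ_{k+1}, and for j < k, |S(φ)_{kj}| = |S(φ)_{jk}| ≤ φ_{j+1} (each off-diagonal entry in column j is either 0, φ_{j+1}, or −φ_{j+1}). Then there exists a choice of φ_2,...,φ_N > 0 such that S(φ) is positive definite; moreover, for any η > 0 the φ's can be chosen so that λ_min(S(φ)) ≥ η. -/

import Mathlib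

open Matrix

lemma geo_aux_stmt9 : ∀ n : ℕ, ∑ i ∈ Finset.range n, (1/4:ℝ)^(i+1) ≤ 1/3 - (1/3)*(1/4:ℝ)^n := by
  intro n
  induction n with
  | zero => simp
  | succ n ih =>
    rw [Finset.sum_range_succ]
    have h : (1/4:ℝ)^(n+1) = (1/4) * (1/4)^n := by ring
    nlinarith [pow_nonneg (by norm_num : (0:ℝ) ≤ 1/4) n]

lemma geo_stmt9 (n : ℕ) : ∑ i ∈ Finset.range n, (1/4:ℝ)^(i+1) ≤ 1/3 := by
  have := geo_aux_stmt9 n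
  nlinarith [pow_nonneg (by norm_num : (0:ℝ) ≤ 1/4) n]

lemma row_bound_stmt9 (m : ℕ) (k : Fin m) :
    ∑ j : Fin m, (if j = k then 0 else (1/4:ℝ) ^ Nat.dist k.1 j.1) ≤ 2/3 := by
  have split : ∀ j : Fin m, (if j = k then 0 else (1/4:ℝ) ^ Nat.dist k.1 j.1)
      = (if j.1 < k.1 then (1/4:ℝ)^(k.1 - j.1) else 0)
      + (if k.1 < j.1 then (1/4:ℝ)^(j.1 - k.1) else 0) := by
    intro j
    rcases lt_trichotomy j.1 k.1 with h|h|h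
    · rw [if_neg (fun he => by simp [he] at h), if_pos h, if_neg (by omega),
        Nat.dist_comm, Nat.dist_eq_sub_of_le h.le]
      ring
    · rw [if_pos (Fin.ext h), if_neg (by omega), if_neg (by omega)]; ring
    · rw [if_neg (fun he => by simp [he] at h), if_neg (by omega), if_pos h,
        Nat.dist_eq_sub_of_le h.le]
      ring
  rw [Finset.sum_congr rfl (fun j _ => split j), Finset.sum_add_distrib]
  have h1 : ∑ j : Fin m, (if j.1 < k.1 then (1/4:ℝ)^(k.1 - j.1) else 0) ≤ 1/3 := by
    rw [Fin.sum_univ_eq_sum_range (fun t => if t < k.1 then (1/4:ℝ)^(k.1 - t) else 0) m,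
      ← Finset.sum_filter]
    have hf : (Finset.range m).filter (fun t => t < k.1) = Finset.range k.1 := by
      ext t; simp; omega
    rw [hf]
    have hr : ∑ t ∈ Finset.range k.1, (1/4:ℝ)^(k.1 - t)
        = ∑ t ∈ Finset.range k.1, (1/4:ℝ)^(t+1) := by
      rw [← Finset.sum_range_reflect]
      apply Finset.sum_congr rfl
      intro t ht
      simp only [Finset.mem_range] at ht
      congr 1
      omega
    rw [hr]; exact geo_stmt9 _
  have h2 : ∑ j : Fin m, (if k.1 < j.1 then (1/4:ℝ)^(j.1 - k.1) else 0) ≤ 1/3 := by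
    rw [Fin.sum_univ_eq_sum_range (fun t => if k.1 < t then (1/4:ℝ)^(t - k.1) else 0) m,
      ← Finset.sum_filter]
    have hf : (Finset.range m).filter (fun t => k.1 < t) = Finset.Ico (k.1+1) m := by
      ext t; simp [Finset.mem_Ico]; omega
    rw [hf, Finset.sum_Ico_eq_sum_range]
    have hr : ∀ i ∈ Finset.range (m - (k.1+1)), (1/4:ℝ)^(k.1+1+i - k.1) = (1/4:ℝ)^(i+1) := by
      intro i _; congr 1; omega
    rw [Finset.sum_congr rfl hr]
    exact geo_stmt9 _
  linarith

lemma pt_bound_stmt9 (d : ℕ) (c a b s : ℝ) (hc : 0 ≤ c) (hs : |s| ≤ c) :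
    -(1/2) * (1/4:ℝ)^d * (c * a^2 + (c * 16^d) * b^2) ≤ s * (a * b) := by
  have h1 : (1/2:ℝ)^d * (2:ℝ)^d = 1 := by rw [← mul_pow]; norm_num
  have h2 : (1/4:ℝ)^d = (1/2:ℝ)^d * (1/2:ℝ)^d := by rw [← mul_pow]; norm_num
  have h3 : (1/4:ℝ)^d * (16:ℝ)^d = (2:ℝ)^d * (2:ℝ)^d := by
    rw [← mul_pow, ← mul_pow]; norm_num
  have hab : c * |a * b| ≤ (1/2) * (1/4:ℝ)^d * (c * a^2 + (c * 16^d) * b^2) := by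
    have key : 2 * |a| * |b| ≤ (1/4:ℝ)^d * a^2 + ((1/4)^d * 16^d) * b^2 := by
      have hsq := sq_nonneg ((1/2:ℝ)^d * |a| - (2:ℝ)^d * |b|)
      have e1 : ((1/2:ℝ)^d * |a|)^2 = (1/4:ℝ)^d * a^2 := by
        rw [mul_pow, sq_abs, h2, sq]
      have e2 : ((2:ℝ)^d * |b|)^2 = ((1/4:ℝ)^d * 16^d) * b^2 := by
        rw [mul_pow, sq_abs, h3, sq]
      nlinarith [h1, abs_nonneg a, abs_nonneg b]
    have habm : |a * b| = |a| * |b| := abs_mul a b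
    nlinarith [abs_nonneg (a*b)]
  have hlow : -(c * |a * b|) ≤ s * (a * b) := by
    have := neg_abs_le (s * (a * b))
    have habs : |s * (a*b)| = |s| * |a*b| := abs_mul _ _
    nlinarith [abs_nonneg (a*b)]
  linarith

theorem stmt_9 (m : ℕ) (hm : 1 ≤ m) (p : Fin m → Fin (m + 1))
    (hp : ∀ k, p k < k.succ) (η : ℝ) (hη : 0 < η) :
    ∃ φ : Fin m → ℝ, (∀ k, 0 < φ k) ∧
      ∀ S : Matrix (Fin m) (Fin m) ℝ, S.IsSymm →
        (∀ k, S k k = 2 * φ k) →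
        (∀ j k : Fin m, j < k → |S k j| ≤ φ j) →
        S.PosDef ∧ ∀ x : Fin m → ℝ, η * (x ⬝ᵥ x) ≤ x ⬝ᵥ (S *ᵥ x) := by
  set φ : Fin m → ℝ := fun k => η * 16 ^ (k : ℕ) with hφ
  have hφpos : ∀ k, 0 < φ k := fun k => by positivity
  refine ⟨φ, hφpos, fun S hS hdiag hoff => ?_⟩
  have key : ∀ x : Fin m → ℝ, η * (x ⬝ᵥ x) ≤ x ⬝ᵥ (S *ᵥ x) := by
    intro x
    set u : Fin m → Fin m → ℝ :=
      fun k j => (1/4:ℝ)^(Nat.dist k.1 j.1) * (φ k * x k ^ 2) with hu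
    set g : Fin m → Fin m → ℝ := fun k j =>
      if j = k then 2 * φ k * x k ^ 2
      else -(1/2) * (1/4:ℝ)^(Nat.dist k.1 j.1) * (φ j * x j ^ 2 + φ k * x k ^ 2) with hg
    have hsum : x ⬝ᵥ (S *ᵥ x) = ∑ k, ∑ j, x k * (S k j * x j) := by
      simp [dotProduct, mulVec, Finset.mul_sum]
    -- pointwise bound
    have hpt : ∀ k j : Fin m, g k j ≤ x k * (S k j * x j) := by
      intro k j
      rcases lt_trichotomy j k with h | h | h
      · have hne : j ≠ k := ne_of_lt h
        have hlt : j.1 < k.1 := h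
        have hd : Nat.dist k.1 j.1 = k.1 - j.1 := by
          rw [Nat.dist_comm]; exact Nat.dist_eq_sub_of_le hlt.le
        have hb := hoff j k h
        have hφk : φ k = φ j * 16 ^ (k.1 - j.1) := by
          simp only [hφ]; rw [mul_assoc, ← pow_add]; congr 2; omega
        have hpb := pt_bound_stmt9 (k.1 - j.1) (φ j) (x j) (x k) (S k j) (hφpos j).le hb
        have hre : x k * (S k j * x j) = S k j * (x j * x k) := by ring
        simp only [hg, if_neg hne, hd, hφk, hre]
        linarith [hpb]
      · subst h
        simp only [hg, if_pos rfl, hdiag j]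
        exact le_of_eq (by ring)
      · have hne : j ≠ k := (ne_of_lt h).symm
        have hlt : k.1 < j.1 := h
        have hd : Nat.dist k.1 j.1 = j.1 - k.1 := Nat.dist_eq_sub_of_le hlt.le
        have hb := hoff k j h
        have hφj : φ j = φ k * 16 ^ (j.1 - k.1) := by
          simp only [hφ]; rw [mul_assoc, ← pow_add]; congr 2; omega
        have hSkj : S k j = S j k := hS.apply j k
        have hpb := pt_bound_stmt9 (j.1 - k.1) (φ k) (x k) (x j) (S j k) (hφpos k).le hb
        have hre : x k * (S j k * x j) = S j k * (x k * x j) := by ring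
        simp only [hg, if_neg hne, hd, hφj, hSkj, hre]
        linarith [hpb]
    -- row decomposition of g
    have hF : ∀ k : Fin m, ∑ j, g k j = 2 * φ k * x k ^ 2
        - (1/2) * (∑ j, (if j = k then 0 else u k j))
        - (1/2) * (∑ j, (if j = k then 0 else u j k)) := by
      intro k
      have hptw : ∀ j : Fin m, g k j = (if j = k then 2 * φ k * x k ^ 2 else 0)
          - (1/2) * (if j = k then 0 else u k j)
          - (1/2) * (if j = k then 0 else u j k) := by
        intro j
        by_cases hjk : j = k
        · simp [hg, hjk]
        · simp only [hg, hu, if_neg hjk]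
          rw [Nat.dist_comm j.1 k.1]
          ring
      rw [Finset.sum_congr rfl (fun j _ => hptw j), Finset.sum_sub_distrib,
        Finset.sum_sub_distrib, Finset.sum_ite_eq' Finset.univ k
          (fun _ => 2 * φ k * x k ^ 2), if_pos (Finset.mem_univ k),
        ← Finset.mul_sum, ← Finset.mul_sum]
    -- swap the two off-diagonal double sums
    have hswap : ∑ k, ∑ j, (if j = k then (0:ℝ) else u j k)
        = ∑ k, ∑ j, (if j = k then 0 else u k j) := by
      rw [Finset.sum_comm]
      apply Finset.sum_congr rfl; intro k _
      apply Finset.sum_congr rfl; intro j _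
      by_cases h : j = k
      · simp [h]
      · rw [if_neg h, if_neg (fun he => h he.symm)]
    -- row bound
    have hrow : ∀ k : Fin m, ∑ j, (if j = k then (0:ℝ) else u k j)
        ≤ (2/3) * (φ k * x k ^ 2) := by
      intro k
      have hptw : ∀ j : Fin m, (if j = k then (0:ℝ) else u k j)
          = (if j = k then 0 else (1/4:ℝ)^(Nat.dist k.1 j.1)) * (φ k * x k ^ 2) := by
        intro j
        by_cases h : j = k <;> simp [hu, h]
      rw [Finset.sum_congr rfl (fun j _ => hptw j), ← Finset.sum_mul]
      have hb := row_bound_stmt9 m k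
      have hnn : (0:ℝ) ≤ φ k * x k ^ 2 := by positivity
      exact mul_le_mul_of_nonneg_right hb hnn
    -- total
    have htot : ∑ k, ∑ j, g k j
        = ∑ k, (2 * φ k * x k ^ 2 - ∑ j, (if j = k then (0:ℝ) else u k j)) := by
      rw [Finset.sum_congr rfl (fun k _ => hF k), Finset.sum_sub_distrib,
        Finset.sum_sub_distrib, ← Finset.mul_sum, ← Finset.mul_sum, hswap,
        Finset.sum_sub_distrib]
      ring
    calc η * (x ⬝ᵥ x) = ∑ k, η * (x k * x k) := by
          simp [dotProduct, Finset.mul_sum]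
      _ ≤ ∑ k, (2 * φ k * x k ^ 2 - ∑ j, (if j = k then (0:ℝ) else u k j)) := by
          apply Finset.sum_le_sum
          intro k _
          have h16 : (1:ℝ) ≤ 16 ^ (k.1) := one_le_pow₀ (by norm_num)
          have hb := hrow k
          have hx2 : (0:ℝ) ≤ x k ^ 2 := sq_nonneg _
          have hmul : η * x k ^ 2 * 1 ≤ η * x k ^ 2 * 16 ^ (k.1) :=
            mul_le_mul_of_nonneg_left h16 (by positivity)
          simp only [hφ] at hb ⊢
          nlinarith [hb, mul_nonneg hη.le hx2]
      _ = ∑ k, ∑ j, g k j := htot.symm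
      _ ≤ ∑ k, ∑ j, x k * (S k j * x j) :=
          Finset.sum_le_sum fun k _ => Finset.sum_le_sum fun j _ => hpt k j
      _ = x ⬝ᵥ (S *ᵥ x) := hsum.symm
  refine ⟨Matrix.PosDef.of_dotProduct_mulVec_pos hS fun x hx => ?_, key⟩
  have h1 := key x
  have hnn : 0 ≤ x ⬝ᵥ x := Finset.sum_nonneg fun i _ => mul_self_nonneg _
  have hne : x ⬝ᵥ x ≠ 0 := fun h0 => hx (dotProduct_self_eq_zero.mp h0)
  have hpos : 0 < x ⬝ᵥ x := lt_of_le_of_ne hnn (Ne.symm hne)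
  have : (0:ℝ) < η * (x ⬝ᵥ x) := mul_pos hη hpos
  calc (0:ℝ) < η * (x ⬝ᵥ x) := this
    _ ≤ x ⬝ᵥ (S *ᵥ x) := h1
    _ = star x ⬝ᵥ (S *ᵥ x) := by rw [star_trivial]
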